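/- Let α ∈ (0,1], β ∈ (0,1), and let (γ_t)_{t≥0} be a nonnegative sequence with Σ_t γ_t^{1+α} < ∞. Then Σ_{t=0}^∞ Σ_{i=0}^{t−1} β^{iα} γ_t^{1−α} γ_{t−1−i}^{2α} ≤ (1/(1−β^α)) Σ_{t=0}^∞ γ_t^{1+α} ≤ S/(1−β^α), where S = 1 + Σ_{t=0}^∞ γ_t^{1+α}. -/

import Mathlib

open Filter Topology
open scoped ENNReal NNReal

private lemma sigmaFin_ext {a b : ℕ} (i : Fin a) (j : Fin b) (h : a = b)
    (hij : (i : ℕ) = (j : ℕ)) : (⟨a, i⟩ : Σ n : ℕ, Fin n) = ⟨b, j⟩ := by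
  subst h
  exact congrArg _ (Fin.ext hij)

/-- Reindexing equivalence: pairs `(t, i)` with `i < t` correspond to `(i, s)`
with `t = i + s + 1`. -/
def sigmaFinEquivProd : (Σ t : ℕ, Fin t) ≃ ℕ × ℕ where
  toFun p := (p.2, p.1 - 1 - p.2)
  invFun q := ⟨q.1 + q.2 + 1, ⟨q.1, by omega⟩⟩
  left_inv p := by
    obtain ⟨t, i⟩ := p
    have hi : (i : ℕ) < t := i.2
    exact sigmaFin_ext _ _
      (show (i : ℕ) + (t - 1 - (i : ℕ)) + 1 = t by omega) rfl
  right_inv q := by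
    obtain ⟨i, s⟩ := q
    have h : (i + s + 1) - 1 - i = s := by omega
    dsimp only
    rw [h]

/-- **Double-sum estimate (13).** For nonnegative stepsizes `γ` with
`∑ γ_t^{1+α} < ∞`,
`∑_t ∑_{i<t} β^{iα} γ_t^{1-α} γ_{t-1-i}^{2α} ≤ (1/(1-β^α)) ∑ γ_t^{1+α} ≤ S/(1-β^α)`
where `S = 1 + ∑ γ_t^{1+α}`. -/
theorem momentum_double_sum_estimate'
    (α β : ℝ) (hα0 : 0 < α) (hα1 : α ≤ 1) (hβ0 : 0 < β) (hβ1 : β < 1)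
    (γ : ℕ → ℝ) (hγ : ∀ t, 0 ≤ γ t)
    (hconv : Summable fun t => γ t ^ (1 + α)) :
    (∑' t : ℕ, ∑ i ∈ Finset.range t,
        ENNReal.ofReal (β ^ ((i : ℝ) * α) * γ t ^ (1 - α) * γ (t - 1 - i) ^ (2 * α)) ≤
      ENNReal.ofReal (1 / (1 - β ^ α)) * ∑' t : ℕ, ENNReal.ofReal (γ t ^ (1 + α))) ∧
    ENNReal.ofReal (1 / (1 - β ^ α)) * ∑' t : ℕ, ENNReal.ofReal (γ t ^ (1 + α)) ≤
      ENNReal.ofReal ((1 + ∑' t : ℕ, γ t ^ (1 + α)) / (1 - β ^ α)) := by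
  have hc0 : 0 < β ^ α := Real.rpow_pos_of_pos hβ0 α
  have hc1 : β ^ α < 1 := Real.rpow_lt_one hβ0.le hβ1 hα0
  set c : ℝ := β ^ α with hc
  set w₁ : ℝ := (1 - α) / (1 + α) with hw₁def
  set w₂ : ℝ := 2 * α / (1 + α) with hw₂def
  have h1α : (0:ℝ) < 1 + α := by linarith
  have hw₁ : 0 ≤ w₁ := div_nonneg (by linarith) h1α.le
  have hw₂ : 0 ≤ w₂ := div_nonneg (by linarith) h1α.le
  have hw : w₁ + w₂ = 1 := by
    rw [hw₁def, hw₂def, ← add_div, div_eq_one_iff_eq h1α.ne']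
    ring
  set g : ℕ → ℝ≥0∞ := fun t => ENNReal.ofReal (γ t ^ (1 + α)) with hg
  set G : ℝ≥0∞ := ∑' t, g t with hG
  set K : ℝ≥0∞ := ∑' i : ℕ, ENNReal.ofReal (c ^ i) with hK
  have hKval : K = ENNReal.ofReal (1 / (1 - c)) := by
    rw [hK, ← ENNReal.ofReal_tsum_of_nonneg (fun i => pow_nonneg hc0.le i)
      (summable_geometric_of_lt_one hc0.le hc1),
      tsum_geometric_of_lt_one hc0.le hc1, one_div]
  -- pointwise Young bound
  have key : ∀ t i : ℕ,
      ENNReal.ofReal (β ^ ((i : ℝ) * α) * γ t ^ (1 - α) * γ (t - 1 - i) ^ (2 * α)) ≤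
        ENNReal.ofReal (c ^ i) *
          (ENNReal.ofReal w₁ * g t + ENNReal.ofReal w₂ * g (t - 1 - i)) := by
    intro t i
    have hβi : β ^ ((i : ℝ) * α) = c ^ i := by
      rw [hc, mul_comm, Real.rpow_mul hβ0.le, Real.rpow_natCast]
    have hyoung : γ t ^ (1 - α) * γ (t - 1 - i) ^ (2 * α) ≤
        w₁ * γ t ^ (1 + α) + w₂ * γ (t - 1 - i) ^ (1 + α) := by
      have h := Real.geom_mean_le_arith_mean2_weighted hw₁ hw₂
        (Real.rpow_nonneg (hγ t) (1 + α)) (Real.rpow_nonneg (hγ (t - 1 - i)) (1 + α)) hw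
      have e₁ : (γ t ^ (1 + α)) ^ w₁ = γ t ^ (1 - α) := by
        rw [← Real.rpow_mul (hγ t)]
        congr 1
        rw [hw₁def]
        field_simp
      have e₂ : (γ (t - 1 - i) ^ (1 + α)) ^ w₂ = γ (t - 1 - i) ^ (2 * α) := by
        rw [← Real.rpow_mul (hγ (t - 1 - i))]
        congr 1
        rw [hw₂def]
        field_simp
      rwa [e₁, e₂] at h
    calc ENNReal.ofReal (β ^ ((i : ℝ) * α) * γ t ^ (1 - α) * γ (t - 1 - i) ^ (2 * α))
        ≤ ENNReal.ofReal (c ^ i *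
            (w₁ * γ t ^ (1 + α) + w₂ * γ (t - 1 - i) ^ (1 + α))) := by
          apply ENNReal.ofReal_le_ofReal
          rw [hβi, mul_assoc]
          exact mul_le_mul_of_nonneg_left hyoung (pow_nonneg hc0.le i)
      _ = ENNReal.ofReal (c ^ i) *
            (ENNReal.ofReal w₁ * g t + ENNReal.ofReal w₂ * g (t - 1 - i)) := by
          rw [ENNReal.ofReal_mul (pow_nonneg hc0.le i),
            ENNReal.ofReal_add (mul_nonneg hw₁ (Real.rpow_nonneg (hγ t) _))
              (mul_nonneg hw₂ (Real.rpow_nonneg (hγ (t - 1 - i)) _)),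
            ENNReal.ofReal_mul hw₁, ENNReal.ofReal_mul hw₂]
  -- main chain
  set F : (Σ t : ℕ, Fin t) → ℝ≥0∞ := fun p =>
    ENNReal.ofReal (c ^ (p.2 : ℕ)) *
      (ENNReal.ofReal w₁ * g p.1 + ENNReal.ofReal w₂ * g (p.1 - 1 - p.2)) with hF
  have step1 : (∑' t : ℕ, ∑ i ∈ Finset.range t,
      ENNReal.ofReal (β ^ ((i : ℝ) * α) * γ t ^ (1 - α) * γ (t - 1 - i) ^ (2 * α))) ≤
      ∑' p : Σ t : ℕ, Fin t, F p := by
    rw [ENNReal.tsum_sigma']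
    apply ENNReal.tsum_le_tsum
    intro t
    rw [← Fin.sum_univ_eq_sum_range, tsum_fintype]
    exact Finset.sum_le_sum fun i _ => key t i
  have split : (∑' p : Σ t : ℕ, Fin t, F p) =
      (∑' p : Σ t : ℕ, Fin t, ENNReal.ofReal (c ^ (p.2 : ℕ)) * (ENNReal.ofReal w₁ * g p.1)) +
      (∑' p : Σ t : ℕ, Fin t, ENNReal.ofReal (c ^ (p.2 : ℕ)) *
        (ENNReal.ofReal w₂ * g (p.1 - 1 - p.2))) := by
    rw [← ENNReal.tsum_add]
    exact tsum_congr fun p => by simp only [hF, mul_add]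
  have partA : (∑' p : Σ t : ℕ, Fin t,
      ENNReal.ofReal (c ^ (p.2 : ℕ)) * (ENNReal.ofReal w₁ * g p.1)) ≤
      K * (ENNReal.ofReal w₁ * G) := by
    rw [ENNReal.tsum_sigma']
    calc (∑' t : ℕ, ∑' i : Fin t, ENNReal.ofReal (c ^ (i : ℕ)) * (ENNReal.ofReal w₁ * g t))
        ≤ ∑' t : ℕ, K * (ENNReal.ofReal w₁ * g t) := by
          apply ENNReal.tsum_le_tsum
          intro t
          rw [ENNReal.tsum_mul_right]
          refine mul_le_mul_left ?_ _
          exact Summable.tsum_le_tsum_of_inj Fin.val Fin.val_injective (fun _ _ => zero_le)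
            (fun i => le_rfl) ENNReal.summable ENNReal.summable
      _ = K * (ENNReal.ofReal w₁ * G) := by
          rw [ENNReal.tsum_mul_left, ENNReal.tsum_mul_left]
  have partB : (∑' p : Σ t : ℕ, Fin t,
      ENNReal.ofReal (c ^ (p.2 : ℕ)) * (ENNReal.ofReal w₂ * g (p.1 - 1 - p.2))) =
      K * (ENNReal.ofReal w₂ * G) := by
    calc (∑' p : Σ t : ℕ, Fin t,
        ENNReal.ofReal (c ^ (p.2 : ℕ)) * (ENNReal.ofReal w₂ * g (p.1 - 1 - p.2)))
        = ∑' q : ℕ × ℕ, ENNReal.ofReal (c ^ q.1) * (ENNReal.ofReal w₂ * g q.2) :=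
          Equiv.tsum_eq sigmaFinEquivProd
            (fun q : ℕ × ℕ => ENNReal.ofReal (c ^ q.1) * (ENNReal.ofReal w₂ * g q.2))
      _ = K * (ENNReal.ofReal w₂ * G) := by
          rw [ENNReal.tsum_prod']
          simp_rw [ENNReal.tsum_mul_left, ← hG]
          rw [← ENNReal.tsum_mul_right]
  have hsum : ENNReal.ofReal w₁ + ENNReal.ofReal w₂ = 1 := by
    rw [← ENNReal.ofReal_add hw₁ hw₂, hw, ENNReal.ofReal_one]
  have first : (∑' t : ℕ, ∑ i ∈ Finset.range t,
      ENNReal.ofReal (β ^ ((i : ℝ) * α) * γ t ^ (1 - α) * γ (t - 1 - i) ^ (2 * α))) ≤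
      ENNReal.ofReal (1 / (1 - c)) * G := by
    calc (∑' t : ℕ, ∑ i ∈ Finset.range t,
        ENNReal.ofReal (β ^ ((i : ℝ) * α) * γ t ^ (1 - α) * γ (t - 1 - i) ^ (2 * α)))
        ≤ ∑' p : Σ t : ℕ, Fin t, F p := step1
      _ ≤ K * (ENNReal.ofReal w₁ * G) + K * (ENNReal.ofReal w₂ * G) := by
          rw [split]; exact add_le_add partA partB.le
      _ = K * G := by
          rw [← mul_add, ← add_mul, hsum, one_mul]
      _ = ENNReal.ofReal (1 / (1 - c)) * G := by rw [hKval]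
  refine ⟨first, ?_⟩
  have hS0 : 0 ≤ ∑' t : ℕ, γ t ^ (1 + α) :=
    tsum_nonneg fun t => Real.rpow_nonneg (hγ t) _
  have hGval : G = ENNReal.ofReal (∑' t : ℕ, γ t ^ (1 + α)) :=
    (ENNReal.ofReal_tsum_of_nonneg (fun t => Real.rpow_nonneg (hγ t) _) hconv).symm
  rw [hGval, ← ENNReal.ofReal_mul (div_nonneg one_pos.le (by linarith))]
  apply ENNReal.ofReal_le_ofReal
  rw [one_div, inv_mul_eq_div, div_le_div_iff_of_pos_right (by linarith)]
  linarith
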